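/- (Telescoping layer perturbation lemma.) For two L-layer ReLU networks with weights W_i and W_i + H_i respectively, the output difference satisfies ‖f_{w+h}(x) − f_w(x)‖₂ ≤ Σ_{i=1}^{L} (∏_{j>i} ‖W_j + H_j‖₂) · ‖H_i‖₂ · (∏_{j<i} ‖W_j‖₂) · ‖x‖₂. -/

import Mathlib

noncomputable section

/-- Entrywise ReLU on `ℝ^n`. -/
def reluV {n : ℕ} (v : EuclideanSpace ℝ (Fin n)) : EuclideanSpace ℝ (Fin n) :=
  WithLp.toLp 2 (fun i => max 0 (v i))

/-- A composition of ReLU layers `z ↦ ρ(W z)`. -/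
def net (dims : ℕ → ℕ)
    (W : ∀ i : ℕ, EuclideanSpace ℝ (Fin (dims i)) →L[ℝ] EuclideanSpace ℝ (Fin (dims (i + 1)))) :
    (L : ℕ) → EuclideanSpace ℝ (Fin (dims 0)) → EuclideanSpace ℝ (Fin (dims L))
  | 0 => id
  | (L + 1) => fun x => reluV (W L (net dims W L x))

lemma reluV_lipschitz {n : ℕ} (a b : EuclideanSpace ℝ (Fin n)) :
    ‖reluV a - reluV b‖ ≤ ‖a - b‖ := by
  rw [EuclideanSpace.norm_eq, EuclideanSpace.norm_eq]
  apply Real.sqrt_le_sqrt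
  apply Finset.sum_le_sum
  intro i _
  have h1 : (a - b) i = a i - b i := rfl
  have h2 : (reluV a - reluV b) i = max 0 (a i) - max 0 (b i) := by simp [reluV]
  rw [h1, h2, Real.norm_eq_abs, Real.norm_eq_abs]
  apply pow_le_pow_left₀ (abs_nonneg _) _ 2
  rw [max_comm 0 (a i), max_comm 0 (b i)]
  exact abs_max_sub_max_le_abs _ _ _

lemma reluV_norm_le {n : ℕ} (a : EuclideanSpace ℝ (Fin n)) : ‖reluV a‖ ≤ ‖a‖ := by
  have hz : reluV (0 : EuclideanSpace ℝ (Fin n)) = 0 := by ext i; simp [reluV]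
  have := reluV_lipschitz a 0
  simpa [hz] using this

lemma net_norm_le (dims : ℕ → ℕ)
    (W : ∀ i : ℕ, EuclideanSpace ℝ (Fin (dims i)) →L[ℝ] EuclideanSpace ℝ (Fin (dims (i + 1))))
    (x : EuclideanSpace ℝ (Fin (dims 0))) :
    ∀ L, ‖net dims W L x‖ ≤ (∏ j ∈ Finset.range L, ‖W j‖) * ‖x‖ := by
  intro L
  induction L with
  | zero => simp [net]
  | succ L ih =>
      calc ‖net dims W (L + 1) x‖ ≤ ‖W L (net dims W L x)‖ := reluV_norm_le _
        _ ≤ ‖W L‖ * ‖net dims W L x‖ := (W L).le_opNorm _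
        _ ≤ ‖W L‖ * ((∏ j ∈ Finset.range L, ‖W j‖) * ‖x‖) := by
              exact mul_le_mul_of_nonneg_left ih (norm_nonneg _)
        _ = (∏ j ∈ Finset.range (L + 1), ‖W j‖) * ‖x‖ := by
              rw [Finset.prod_range_succ]; ring

theorem stmt17 (dims : ℕ → ℕ) (L : ℕ)
    (W H : ∀ i : ℕ, EuclideanSpace ℝ (Fin (dims i)) →L[ℝ] EuclideanSpace ℝ (Fin (dims (i + 1))))
    (x : EuclideanSpace ℝ (Fin (dims 0))) :
    ‖net dims (fun i => W i + H i) L x - net dims W L x‖ ≤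
      ∑ i ∈ Finset.range L,
        (∏ j ∈ Finset.Ico (i + 1) L, ‖W j + H j‖) * ‖H i‖ *
          (∏ j ∈ Finset.range i, ‖W j‖) * ‖x‖ := by
  induction L with
  | zero => simp [net]
  | succ L ih =>
      set A := net dims (fun i => W i + H i) L x with hA
      set B := net dims W L x with hB
      have step : ‖net dims (fun i => W i + H i) (L + 1) x - net dims W (L + 1) x‖ ≤
          ‖W L + H L‖ * ‖A - B‖ + ‖H L‖ * ((∏ j ∈ Finset.range L, ‖W j‖) * ‖x‖) := by
        have h1 : ‖net dims (fun i => W i + H i) (L + 1) x - net dims W (L + 1) x‖ ≤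
            ‖(W L + H L) A - W L B‖ := reluV_lipschitz _ _
        have h2 : (W L + H L) A - W L B = (W L + H L) (A - B) + H L B := by
          simp [map_sub]; abel
        calc ‖net dims (fun i => W i + H i) (L + 1) x - net dims W (L + 1) x‖
            ≤ ‖(W L + H L) (A - B) + H L B‖ := by rw [← h2]; exact h1
          _ ≤ ‖(W L + H L) (A - B)‖ + ‖H L B‖ := norm_add_le _ _
          _ ≤ ‖W L + H L‖ * ‖A - B‖ + ‖H L‖ * ‖B‖ :=
              add_le_add ((W L + H L).le_opNorm _) ((H L).le_opNorm _)
          _ ≤ ‖W L + H L‖ * ‖A - B‖ + ‖H L‖ * ((∏ j ∈ Finset.range L, ‖W j‖) * ‖x‖) := by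
              exact add_le_add_right
                (mul_le_mul_of_nonneg_left (net_norm_le dims W x L) (norm_nonneg _)) _
      refine step.trans ?_
      have h3 : ‖W L + H L‖ * ‖A - B‖ ≤ ‖W L + H L‖ *
          (∑ i ∈ Finset.range L,
            (∏ j ∈ Finset.Ico (i + 1) L, ‖W j + H j‖) * ‖H i‖ *
              (∏ j ∈ Finset.range i, ‖W j‖) * ‖x‖) :=
        mul_le_mul_of_nonneg_left ih (norm_nonneg _)
      rw [Finset.sum_range_succ]
      have hprod : ∀ i ∈ Finset.range L,
          (∏ j ∈ Finset.Ico (i + 1) (L + 1), ‖W j + H j‖) =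
            (∏ j ∈ Finset.Ico (i + 1) L, ‖W j + H j‖) * ‖W L + H L‖ := by
        intro i hi
        rw [Finset.prod_Ico_succ_top]
        exact Nat.succ_le_of_lt (Finset.mem_range.mp hi)
      calc ‖W L + H L‖ * ‖A - B‖ + ‖H L‖ * ((∏ j ∈ Finset.range L, ‖W j‖) * ‖x‖)
          ≤ ‖W L + H L‖ * (∑ i ∈ Finset.range L,
              (∏ j ∈ Finset.Ico (i + 1) L, ‖W j + H j‖) * ‖H i‖ *
                (∏ j ∈ Finset.range i, ‖W j‖) * ‖x‖) +
            ‖H L‖ * ((∏ j ∈ Finset.range L, ‖W j‖) * ‖x‖) := add_le_add_left h3 _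
        _ = (∑ i ∈ Finset.range L,
              (∏ j ∈ Finset.Ico (i + 1) (L + 1), ‖W j + H j‖) * ‖H i‖ *
                (∏ j ∈ Finset.range i, ‖W j‖) * ‖x‖) +
            (∏ j ∈ Finset.Ico (L + 1) (L + 1), ‖W j + H j‖) * ‖H L‖ *
              (∏ j ∈ Finset.range L, ‖W j‖) * ‖x‖ := by
            rw [Finset.mul_sum]
            congr 1
            · apply Finset.sum_congr rfl
              intro i hi
              rw [hprod i hi]; ring
            · simp; ring
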